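/- Let d ≥ 1 and a be natural numbers. Then the number of natural numbers x with x ≤ a and a % d < x % d equals (a/d)·(d − 1 − a % d). -/

import Mathlib

/-- Counting lemma from the output-distribution analysis: among `x ≤ a` (the
`q = 0` case), the number of those with `a % d < x % d` is `(a/d)·(d − 1 − a % d)`. -/
theorem stmt_10 (d a : ℕ) (hd : 1 ≤ d) :
    ((Finset.range (a + 1)).filter (fun x => a % d < x % d)).card
      = (a / d) * (d - 1 - a % d) := by
  induction a using Nat.strong_induction_on with
  | _ a ih =>
    rcases lt_or_ge a d with h | h
    · have h0 : ((Finset.range (a + 1)).filter (fun x => a % d < x % d)) = ∅ := by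
        apply Finset.filter_false_of_mem
        intro x hx
        simp only [Finset.mem_range] at hx
        have hx' : x ≤ a := Nat.lt_succ_iff.mp hx
        rw [Nat.mod_eq_of_lt h, Nat.mod_eq_of_lt (lt_of_le_of_lt hx' h)]
        omega
      rw [h0]
      simp [Nat.div_eq_of_lt h]
    · have had : a - d < a := by omega
      have key := ih (a - d) had
      have hmod : (a - d) % d = a % d := by
        conv_rhs => rw [← Nat.sub_add_cancel h]
        rw [Nat.add_mod_right]
      have hdiv : a / d = (a - d) / d + 1 := by
        conv_lhs => rw [← Nat.sub_add_cancel h]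
        rw [Nat.add_div_right _ (by omega)]
      have hsplit : Finset.range (a + 1) = Finset.range d ∪ Finset.Ico d (a + 1) := by
        rw [Finset.range_eq_Ico, ← Finset.Ico_union_Ico_eq_Ico (by omega : 0 ≤ d) (by omega : d ≤ a + 1), Finset.range_eq_Ico]
      rw [hsplit, Finset.filter_union, Finset.card_union_of_disjoint]
      · have h1 : (Finset.range d).filter (fun x => a % d < x % d)
            = Finset.Ico (a % d + 1) d := by
          ext x
          simp only [Finset.mem_filter, Finset.mem_range, Finset.mem_Ico]
          constructor
          · rintro ⟨hxd, hlt⟩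
            rw [Nat.mod_eq_of_lt hxd] at hlt
            omega
          · rintro ⟨h1, h2⟩
            rw [Nat.mod_eq_of_lt h2]
            omega
        have h2 : ((Finset.Ico d (a + 1)).filter (fun x => a % d < x % d)).card
            = ((Finset.range (a - d + 1)).filter (fun x => (a - d) % d < x % d)).card := by
          apply Finset.card_bij' (fun x _ => x - d) (fun y _ => y + d)
          · intro x hx
            simp only [Finset.mem_filter, Finset.mem_Ico] at hx
            simp only [Finset.mem_filter, Finset.mem_range]
            have hxd : d ≤ x := hx.1.1
            constructor
            · omega
            · rw [hmod]
              have : (x - d) % d = x % d := by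
                conv_rhs => rw [← Nat.sub_add_cancel hxd, Nat.add_mod_right]
              rw [this]; exact hx.2
          · intro y hy
            simp only [Finset.mem_filter, Finset.mem_range] at hy
            simp only [Finset.mem_filter, Finset.mem_Ico]
            constructor
            · omega
            · rw [Nat.add_mod_right]
              rw [hmod] at hy
              exact hy.2
          · intro x hx
            simp only [Finset.mem_filter, Finset.mem_Ico] at hx
            omega
          · intro y hy
            omega
        rw [h1, h2, key, Nat.card_Ico, hmod, hdiv, add_one_mul]
        set p := (a - d) / d * (d - 1 - a % d)
        omega
      · rw [Finset.disjoint_left]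
        intro x hx hx'
        simp only [Finset.mem_filter, Finset.mem_range, Finset.mem_Ico] at hx hx'
        omega
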